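/- arXiv:math/9911218 — 7 statements merged into one kernel-verified Lean document; each statement's English description precedes it below -/
import Mathlib

section
/- Let n ≥ 1 and let T, ι, Σ₀,…,Σ_{n−1}, ψ₀,…,ψ_{n−1}, ψ be as in the context. Then the kernel of the ℤ-linear map ℤ^{n+2} → ℤ^T sending (a₀,…,a_{n−1},b,c) to a₀ψ₀+⋯+a_{n−1}ψ_{n−1}+bψ+c·(ψ∘ι) is the free ℤ-module of rank one generated by (1,1,…,1,−1,−(n−1)). Equivalently, the identity ψ₀+⋯+ψ_{n−1}+(n−2)ψ = (n−1)(ψ+ψ∘ι) holds, and every ℤ-linear relation among ψ₀,…,ψ_{n−1},ψ,ψ∘ι is an integer multiple of this one. -/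
/-- Let `T` be a finite set with an involution `ι`, and let
`Σ₀, …, Σ_{n-1}` be nonempty subsets such that the `2n` sets
`Σ₀, …, Σ_{n-1}, ι(Σ₀), …, ι(Σ_{n-1})` are pairwise disjoint and cover `T`.
Let `ψᵢ` be the indicator function of `Σᵢ ∪ ⋃_{j ≠ i} ι(Σⱼ)` and `ψ` the indicator
function of `⋃ᵢ Σᵢ`.  Then the identity
`ψ₀ + ⋯ + ψ_{n-1} + (n-2)ψ = (n-1)(ψ + ψ∘ι)` holds, and the kernel of the
map `ℤ^{n+2} → ℤ^T`, `(a, b, c) ↦ ∑ aᵢψᵢ + bψ + c (ψ∘ι)`, consists exactly of the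
integer multiples of `(1, …, 1, -1, -(n-1))`. -/
theorem stmt0 {T : Type*} [Fintype T] [DecidableEq T] (n : ℕ) (hn : 1 ≤ n)
    (ι : T → T) (hι : Function.Involutive ι)
    (S : Fin n → Finset T)
    (hne : ∀ i, (S i).Nonempty)
    (hdisj : ∀ p q : Fin n ⊕ Fin n, p ≠ q →
      Disjoint (Sum.elim S (fun i => (S i).image ι) p)
        (Sum.elim S (fun i => (S i).image ι) q))
    (hcover : ∀ x : T, (∃ i, x ∈ S i) ∨ (∃ i, x ∈ (S i).image ι))
    (ψi : Fin n → T → ℤ)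
    (hψi : ∀ i x, ψi i x = if x ∈ S i ∨ ∃ j, j ≠ i ∧ ι x ∈ S j then 1 else 0)
    (ψ : T → ℤ)
    (hψ : ∀ x, ψ x = if ∃ i, x ∈ S i then 1 else 0) :
    (∀ x, (∑ i, ψi i x) + ((n : ℤ) - 2) * ψ x = ((n : ℤ) - 1) * (ψ x + ψ (ι x))) ∧
    (∀ (a : Fin n → ℤ) (b c : ℤ),
      (∀ x, (∑ i, a i * ψi i x) + b * ψ x + c * ψ (ι x) = 0) ↔
        ∃ k : ℤ, (∀ i, a i = k) ∧ b = -k ∧ c = -((n : ℤ) - 1) * k) := by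
  have himg : ∀ (i : Fin n) (x : T), x ∈ (S i).image ι ↔ ι x ∈ S i := by
    intro i x
    simp only [Finset.mem_image]
    constructor
    · rintro ⟨y, hy, rfl⟩; rwa [hι y]
    · intro h; exact ⟨ι x, h, hι x⟩
  have d1 : ∀ {i j : Fin n} {x : T}, x ∈ S i → x ∈ S j → i = j := by
    intro i j x hi hj
    by_contra h
    exact Finset.disjoint_left.mp (hdisj (Sum.inl i) (Sum.inl j) (by simpa using h)) hi hj
  have d2 : ∀ {i j : Fin n} {x : T}, x ∈ S i → ι x ∈ S j → False := by
    intro i j x hi hj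
    exact Finset.disjoint_left.mp (hdisj (Sum.inl i) (Sum.inr j) (by simp)) hi
      ((himg j x).mpr hj)
  have key : ∀ x : T, (∃ i, x ∈ S i) ∨ (∃ i, ι x ∈ S i) := by
    intro x
    rcases hcover x with h | ⟨i, hi⟩
    · exact Or.inl h
    · exact Or.inr ⟨i, (himg i x).mp hi⟩
  have case1 : ∀ (i : Fin n) (x : T), x ∈ S i →
      ψ x = 1 ∧ ψ (ι x) = 0 ∧ ∀ j, ψi j x = if j = i then 1 else 0 := by
    intro i x hx
    refine ⟨by rw [hψ]; exact if_pos ⟨i, hx⟩, ?_, ?_⟩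
    · rw [hψ]; exact if_neg (by rintro ⟨j, hj⟩; exact d2 hx hj)
    · intro j
      rw [hψi]
      by_cases hji : j = i
      · subst hji; rw [if_pos rfl, if_pos (Or.inl hx)]
      · rw [if_neg hji, if_neg]
        rintro (h | ⟨k, _, hk⟩)
        · exact hji (d1 h hx)
        · exact d2 hx hk
  have case2 : ∀ (i : Fin n) (x : T), ι x ∈ S i →
      ψ x = 0 ∧ ψ (ι x) = 1 ∧ ∀ j, ψi j x = if j = i then 0 else 1 := by
    intro i x hx
    have hnx : ∀ j, x ∉ S j := fun j hj => d2 hj hx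
    refine ⟨by rw [hψ]; exact if_neg (by rintro ⟨j, hj⟩; exact hnx j hj),
      by rw [hψ]; exact if_pos ⟨i, hx⟩, ?_⟩
    intro j
    rw [hψi]
    by_cases hji : j = i
    · subst hji
      rw [if_pos rfl, if_neg]
      rintro (h | ⟨k, hk, hk'⟩)
      · exact hnx j h
      · exact hk (d1 hk' hx)
    · rw [if_neg hji, if_pos (Or.inr ⟨i, fun h => hji h.symm, hx⟩)]
  have sum1 : ∀ (a : Fin n → ℤ) (i : Fin n) (x : T),
      (∀ j, ψi j x = if j = i then 1 else 0) → ∑ j, a j * ψi j x = a i := by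
    intro a i x h
    calc ∑ j, a j * ψi j x = ∑ j, if j = i then a j else 0 := by
          refine Finset.sum_congr rfl fun j _ => ?_
          rw [h j]; split_ifs <;> ring
      _ = a i := by simp
  have sum2 : ∀ (a : Fin n → ℤ) (i : Fin n) (x : T),
      (∀ j, ψi j x = if j = i then 0 else 1) →
      ∑ j, a j * ψi j x = (∑ j, a j) - a i := by
    intro a i x h
    calc ∑ j, a j * ψi j x = ∑ j, (a j - if j = i then a j else 0) := by
          refine Finset.sum_congr rfl fun j _ => ?_
          rw [h j]; split_ifs <;> ring
      _ = _ := by rw [Finset.sum_sub_distrib]; simp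
  have part1 : ∀ x, (∑ i, ψi i x) + ((n : ℤ) - 2) * ψ x
      = ((n : ℤ) - 1) * (ψ x + ψ (ι x)) := by
    intro x
    rcases key x with ⟨i, hi⟩ | ⟨i, hi⟩
    · obtain ⟨h1, h2, h3⟩ := case1 i x hi
      have hs : ∑ j, ψi j x = 1 := by
        have := sum1 (fun _ => 1) i x h3
        simpa using this
      rw [hs, h1, h2]; ring
    · obtain ⟨h1, h2, h3⟩ := case2 i x hi
      have hs : ∑ j, ψi j x = (n : ℤ) - 1 := by
        have := sum2 (fun _ => 1) i x h3
        simpa using this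
      rw [hs, h1, h2]; ring
  refine ⟨part1, fun a b c => ⟨?_, ?_⟩⟩
  · intro h
    have hab : ∀ i, a i + b = 0 := by
      intro i
      obtain ⟨y, hy⟩ := hne i
      obtain ⟨h1, h2, h3⟩ := case1 i y hy
      have hy' := h y
      rw [sum1 a i y h3, h1, h2] at hy'
      linarith
    refine ⟨-b, fun i => by linarith [hab i], by ring, ?_⟩
    set i0 : Fin n := ⟨0, hn⟩
    obtain ⟨y, hy⟩ := hne i0
    have hx : ι (ι y) ∈ S i0 := by rw [hι]; exact hy
    obtain ⟨h1, h2, h3⟩ := case2 i0 (ι y) hx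
    have h' := h (ι y)
    rw [sum2 a i0 (ι y) h3, h1, h2] at h'
    have hsum : ∑ j, a j = (n : ℤ) * (-b) := by
      rw [Finset.sum_congr rfl fun j _ => (by linarith [hab j] : a j = -b)]
      simp
    rw [hsum, (by linarith [hab i0] : a i0 = -b)] at h'
    linear_combination h'
  · rintro ⟨k, hk, rfl, rfl⟩ x
    have hA : (∑ i, ψi i x) = ψ x + ((n : ℤ) - 1) * ψ (ι x) := by
      linear_combination part1 x
    have hsum : ∑ i, a i * ψi i x = k * ∑ i, ψi i x := by
      rw [Finset.mul_sum]; exact Finset.sum_congr rfl fun i _ => by rw [hk i]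
    rw [hsum, hA]; ring
end

section
/- Let m, k, c ≥ 1 be integers and set n = m·k and n₀ = c·k. Let X, ι, X₀,…,X_{m−1}, f₀,…,f_{m−1}, f be as in the context. Then the kernel of the ℤ-linear map ℤ^{m+2} → ℤ^X sending (a₀,…,a_{m−1},b,d) to a₀f₀+⋯+a_{m−1}f_{m−1}+bf+d·(f∘ι) is the free ℤ-module of rank one generated by (k,k,…,k,−1,−(n−1)). Equivalently, the identity k(f₀+⋯+f_{m−1})+(n−2)f = (n−1)(f+f∘ι) holds, and every ℤ-linear relation among f₀,…,f_{m−1},f,f∘ι is an integer multiple of this one. -/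
/-- Let `m, k, c ≥ 1`, and set `n = m·k`, `n₀ = c·k`.  Let `X` be a
finite set with an involution `ι`, and `X₀, …, X_{m-1}` nonempty subsets such that the
`2m` sets `X₀, …, X_{m-1}, ι(X₀), …, ι(X_{m-1})` are pairwise disjoint and cover `X`.
Let `fⱼ ∈ ℤ^X` take the value `c` on `Xⱼ`, `0` on the other `Xⱼ′`, `n₀ - c` on `ι(Xⱼ)`
and `n₀` on the other `ι(Xⱼ′)`, and let `f` take the value `n₀` on `⋃ⱼ Xⱼ` and `0`
elsewhere.  Then `k(f₀ + ⋯ + f_{m-1}) + (n-2)f = (n-1)(f + f∘ι)`, and the kernel of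
`ℤ^{m+2} → ℤ^X`, `(a, b, d) ↦ ∑ aⱼfⱼ + bf + d (f∘ι)`, consists exactly of the integer
multiples of `(k, …, k, -1, -(n-1))`. -/
theorem stmt2 {X : Type*} [Fintype X] [DecidableEq X] (m k c : ℕ)
    (hm : 1 ≤ m) (hk : 1 ≤ k) (hc : 1 ≤ c)
    (ι : X → X) (hι : Function.Involutive ι)
    (Xs : Fin m → Finset X)
    (hne : ∀ j, (Xs j).Nonempty)
    (hdisj : ∀ s t : Fin m ⊕ Fin m, s ≠ t →
      Disjoint (Sum.elim Xs (fun j => (Xs j).image ι) s)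
        (Sum.elim Xs (fun j => (Xs j).image ι) t))
    (hcover : ∀ x : X, (∃ j, x ∈ Xs j) ∨ (∃ j, x ∈ (Xs j).image ι))
    (fj : Fin m → X → ℤ)
    (hfj : ∀ j x, fj j x =
      if x ∈ Xs j then (c : ℤ)
      else if ι x ∈ Xs j then (c : ℤ) * k - c
      else if ∃ j', x ∈ Xs j' then 0
      else (c : ℤ) * k)
    (f : X → ℤ)
    (hf : ∀ x, f x = if ∃ j, x ∈ Xs j then (c : ℤ) * k else 0) :
    (∀ x, (k : ℤ) * (∑ j, fj j x) + ((m : ℤ) * k - 2) * f x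
        = ((m : ℤ) * k - 1) * (f x + f (ι x))) ∧
    (∀ (a : Fin m → ℤ) (b d : ℤ),
      (∀ x, (∑ j, a j * fj j x) + b * f x + d * f (ι x) = 0) ↔
        ∃ t : ℤ, (∀ j, a j = (k : ℤ) * t) ∧ b = -t ∧ d = -((m : ℤ) * k - 1) * t) := by
  have hc0 : (c : ℤ) ≠ 0 := by positivity
  have hk0 : (k : ℤ) ≠ 0 := by positivity
  have h1 : ∀ {j j' : Fin m} {x : X}, x ∈ Xs j → x ∈ Xs j' → j = j' := by
    intro j j' x hj hj'
    by_contra hne'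
    exact Finset.disjoint_left.1
      (hdisj (Sum.inl j) (Sum.inl j') (by simpa using hne')) hj hj'
  have h2 : ∀ {j j' : Fin m} {x : X}, x ∈ Xs j → ι x ∉ Xs j' := by
    intro j j' x hj hj'
    exact Finset.disjoint_left.1 (hdisj (Sum.inr j) (Sum.inl j') (by simp))
      (Finset.mem_image.2 ⟨x, hj, rfl⟩) hj'
  have caseA : ∀ (j₀ : Fin m) (x : X), x ∈ Xs j₀ →
      (∀ j, fj j x = if j = j₀ then (c : ℤ) else 0) ∧
      (∑ j, fj j x = c) ∧ f x = (c : ℤ) * k ∧ f (ι x) = 0 := by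
    intro j₀ x hx
    have hval : ∀ j, fj j x = if j = j₀ then (c : ℤ) else 0 := by
      intro j
      rw [hfj]
      by_cases h : j = j₀
      · subst h; simp [hx]
      · rw [if_neg (fun hxj => h (h1 hxj hx)), if_neg (fun hxj => h2 hx hxj),
          if_pos ⟨j₀, hx⟩, if_neg h]
    refine ⟨hval, ?_, ?_, ?_⟩
    · simp [hval]
    · rw [hf, if_pos ⟨j₀, hx⟩]
    · rw [hf, if_neg]
      rintro ⟨j, hj⟩
      exact h2 hx hj
  have caseB : ∀ (j₀ : Fin m) (x : X), ι x ∈ Xs j₀ →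
      (∀ j, fj j x = if j = j₀ then (c : ℤ) * k - c else (c : ℤ) * k) ∧
      (∑ j, fj j x = (m : ℤ) * ((c : ℤ) * k) - c) ∧ f x = 0 ∧ f (ι x) = (c : ℤ) * k := by
    intro j₀ x hx
    have hxn : ∀ j, x ∉ Xs j := by
      intro j hj
      exact h2 hj hx
    have hval : ∀ j, fj j x = if j = j₀ then (c : ℤ) * k - c else (c : ℤ) * k := by
      intro j
      rw [hfj, if_neg (hxn j)]
      by_cases h : j = j₀
      · subst h; simp [hx]
      · rw [if_neg (fun hxj => h (h1 hxj hx)), if_neg (fun ⟨j', hj'⟩ => hxn j' hj'),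
          if_neg h]
    refine ⟨hval, ?_, ?_, ?_⟩
    · have : ∀ j, fj j x = (c : ℤ) * k - (if j = j₀ then (c : ℤ) else 0) := by
        intro j
        rw [hval]
        by_cases h : j = j₀ <;> simp [h]
      rw [Finset.sum_congr rfl (fun j _ => this j), Finset.sum_sub_distrib]
      simp [mul_comm]
    · rw [hf, if_neg (fun ⟨j', hj'⟩ => hxn j' hj')]
    · rw [hf, if_pos ⟨j₀, hx⟩]
  have part1 : ∀ x, (k : ℤ) * (∑ j, fj j x) + ((m : ℤ) * k - 2) * f x
      = ((m : ℤ) * k - 1) * (f x + f (ι x)) := by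
    intro x
    rcases hcover x with ⟨j₀, hx⟩ | ⟨j₀, hx⟩
    · obtain ⟨_, hs, hfx, hfι⟩ := caseA j₀ x hx
      rw [hs, hfx, hfι]; ring
    · obtain ⟨y, hy, rfl⟩ := Finset.mem_image.1 hx
      have hιy : ι (ι y) ∈ Xs j₀ := by rwa [hι]
      obtain ⟨_, hs, hfx, hfι⟩ := caseB j₀ (ι y) hιy
      rw [hs, hfx, hfι]; ring
  refine ⟨part1, ?_⟩
  intro a b d
  constructor
  · intro hrel
    have hb : ∀ j, a j = -b * k := by
      intro j
      obtain ⟨x, hx⟩ := hne j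
      obtain ⟨hval, _, hfx, hfι⟩ := caseA j x hx
      have hs : ∑ j', a j' * fj j' x = a j * c := by
        rw [Finset.sum_congr rfl (fun j' _ => by rw [hval j'])]
        simp [mul_ite]
      have e1 := hrel x
      rw [hs, hfx, hfι] at e1
      have h0 : (a j + b * k) * (c : ℤ) = 0 := by linear_combination e1
      rcases mul_eq_zero.1 h0 with h | h
      · linarith
      · exact absurd h hc0
    have hd : d = b * ((m : ℤ) * k - 1) := by
      obtain ⟨x, hx⟩ := hne ⟨0, hm⟩
      have hιx : ι (ι x) ∈ Xs ⟨0, hm⟩ := by rwa [hι]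
      obtain ⟨hval, hs, hfx, hfι⟩ := caseB ⟨0, hm⟩ (ι x) hιx
      have e2 := hrel (ι x)
      have hsum2 : ∑ j', a j' * fj j' (ι x) = -b * k * ((m : ℤ) * ((c : ℤ) * k) - c) := by
        rw [Finset.sum_congr rfl (fun j' _ => by rw [hb j']), ← Finset.mul_sum, hs]
      rw [hsum2, hfx, hfι] at e2
      have h0 : (d - b * ((m : ℤ) * k - 1)) * ((c : ℤ) * k) = 0 := by linear_combination e2
      rcases mul_eq_zero.1 h0 with h | h
      · linarith
      · exact absurd h (mul_ne_zero hc0 hk0)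
    exact ⟨-b, fun j => by rw [hb]; ring, by ring, by rw [hd]; ring⟩
  · rintro ⟨t, ha, hb, hd⟩ x
    have hp := part1 x
    have hs : ∑ j, a j * fj j x = (k : ℤ) * t * ∑ j, fj j x := by
      rw [Finset.sum_congr rfl (fun j _ => by rw [ha j]), ← Finset.mul_sum]
    rw [hs, hb, hd]
    linear_combination t * hp
end

section
/- Let K be a number field, p a prime number, q = p^a with a ≥ 1, and let π ∈ K^× be a Weil q-number of weight m. Then for every nonzero prime ideal v of O_K not lying above p, one has ord_v(π) = 0. -/
open IsDedekindDomain

/-- The order (normalized additive valuation) `ord_v(x)` of `x ∈ K` at a nonzero prime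
ideal `v` of the ring of integers of `K`: the exponent of `v` in the factorization of
the fractional ideal `x·O_K` (junk value `0` when `x = 0`). -/
noncomputable def ordv {K : Type*} [Field K] [NumberField K]
    (v : HeightOneSpectrum (NumberField.RingOfIntegers K)) (x : K) : ℤ :=
  if hx : v.valuation K x = 0 then 0 else -(WithZero.unzero hx).toAdd

/-- Let `K` be a number field, `p` a prime, `q = p^a` with `a ≥ 1`, and
`π ∈ K^×` a Weil `q`-number of weight `m` (i.e. `q^N·π` is an algebraic integer for some
`N`, and `σ(π)·conj(σ(π)) = q^m` for every embedding `σ : K → ℂ`).  Then `ord_v(π) = 0`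
for every nonzero prime ideal `v` of `O_K` not lying above `p`. -/
theorem stmt5 {K : Type*} [Field K] [NumberField K]
    (p : ℕ) (hp : p.Prime) (a : ℕ) (ha : 1 ≤ a) (m : ℤ)
    (π : K) (hπ0 : π ≠ 0)
    (hint : ∃ N : ℕ, IsIntegral ℤ (((p : K) ^ a) ^ N * π))
    (hw : ∀ σ : K →+* ℂ, σ π * (starRingEnd ℂ) (σ π) = ((p : ℂ) ^ a) ^ m) :
    ∀ v : HeightOneSpectrum (NumberField.RingOfIntegers K),
      (p : NumberField.RingOfIntegers K) ∉ v.asIdeal → ordv v π = 0 := by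
  intro v hv
  obtain ⟨N, hN⟩ := hint
  obtain ⟨σ⟩ : Nonempty (K →+* ℂ) := inferInstance
  have hp0 : (p : K) ≠ 0 := by exact_mod_cast hp.ne_zero
  have hq0 : ((p : K) ^ a) ≠ 0 := pow_ne_zero _ hp0
  -- the valuation of p (hence of q) at v is 1
  have hvp : v.valuation K ((p : K)) = 1 := by
    have hmap : ((p : K)) = algebraMap (NumberField.RingOfIntegers K) K ((p : NumberField.RingOfIntegers K)) := by
      simp
    have h1 : ¬ v.valuation K (algebraMap (NumberField.RingOfIntegers K) K ((p : NumberField.RingOfIntegers K))) < 1 := by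
      rw [v.valuation_lt_one_iff_dvd, Ideal.dvd_span_singleton]
      exact hv
    rw [hmap]
    exact le_antisymm (v.valuation_le_one _) (not_lt.mp h1)
  have hvq : v.valuation K ((p : K) ^ a) = 1 := by rw [map_pow, hvp, one_pow]
  -- σ π ≠ 0
  have hσπ : σ π ≠ 0 := by
    simpa using σ.injective.ne hπ0
  -- β = q^N * q^m / π is integral over ℤ
  set β : K := ((p : K) ^ a) ^ N * ((p : K) ^ a) ^ m * π⁻¹ with hβ
  have hσβ : σ β = (starRingEnd ℂ) (σ (((p : K) ^ a) ^ N * π)) := by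
    have hconj : (starRingEnd ℂ) (σ π) = ((p : ℂ) ^ a) ^ m * (σ π)⁻¹ := by
      field_simp
      rw [mul_comm]
      exact hw σ
    simp only [hβ, map_mul, map_pow, map_zpow₀, map_inv₀, map_natCast, hconj]
    ring
  have hβint : IsIntegral ℤ β := by
    rw [isIntegral_algHom_iff σ.toIntAlgHom σ.injective |>.symm]
    show IsIntegral ℤ (σ β)
    rw [hσβ]
    exact (hN.map σ.toIntAlgHom).map (starRingEnd ℂ).toIntAlgHom
  -- valuation ≤ 1 for integral elements
  have hle : ∀ x : K, IsIntegral ℤ x → v.valuation K x ≤ 1 := by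
    intro x hx
    obtain ⟨y, hy⟩ := IsIntegralClosure.isIntegral_iff (A := NumberField.RingOfIntegers K) |>.mp hx
    rw [← hy]
    exact v.valuation_le_one y
  have h1 : v.valuation K π ≤ 1 := by
    have := hle _ hN
    rwa [map_mul, map_pow, hvq, one_pow, one_mul] at this
  have hπv0 : v.valuation K π ≠ 0 := (Valuation.ne_zero_iff (v.valuation K)).mpr hπ0
  have h2 : (1 : WithZero (Multiplicative ℤ)) ≤ v.valuation K π := by
    have := hle _ hβint
    rw [hβ, map_mul, map_mul, map_pow, map_zpow₀, map_inv₀, hvq, one_pow, one_zpow,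
      one_mul, one_mul] at this
    exact (inv_le_one₀ (zero_lt_iff.mpr hπv0)).mp this
  have hval : v.valuation K π = 1 := le_antisymm h1 h2
  unfold ordv
  rw [dif_neg hπv0]
  have : WithZero.unzero hπv0 = 1 := by
    apply WithZero.coe_inj.mp
    rw [WithZero.coe_unzero, hval, WithZero.coe_one]
  rw [this, toAdd_one, neg_zero]
end

section
/- Let K be a number field, p a prime number, q = p^a with a ≥ 1, and let π, π′ ∈ K^× be Weil q-numbers of the same weight m. If ord_v(π) = ord_v(π′) for every nonzero prime ideal v of O_K lying above p, then π/π′ is a root of unity. (A Weil q-number is determined up to a root of unity by its slope function.) -/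
open IsDedekindDomain

theorem assoc_le_of_count_le {α : Type*} [CommMonoidWithZero α]
    [UniqueFactorizationMonoid α] [DecidableEq (Associates α)]
    [∀ q : Associates α, Decidable (Irreducible q)]
    {a b : Associates α} (ha : a ≠ 0) (hb : b ≠ 0)
    (h : ∀ p : Associates α, Irreducible p → p.count a.factors ≤ p.count b.factors) :
    a ≤ b := by
  classical
  rw [← Associates.factors_le]
  obtain ⟨sa, h_sa⟩ := Associates.factors_eq_some_iff_ne_zero.mpr ha
  obtain ⟨sb, h_sb⟩ := Associates.factors_eq_some_iff_ne_zero.mpr hb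
  rw [h_sa, h_sb] at h ⊢
  rw [WithTop.coe_le_coe, Multiset.le_iff_count]
  rintro ⟨p, hp⟩
  have h2 := h p hp
  rwa [Associates.count_some hp, Associates.count_some hp] at h2

theorem exists_algebraMap_eq {K : Type*} [Field K] [NumberField K] (x : K)
    (h : ∀ v : HeightOneSpectrum (NumberField.RingOfIntegers K), v.valuation K x ≤ 1) :
    ∃ y : NumberField.RingOfIntegers K, algebraMap _ K y = x := by
  classical
  by_cases hx : x = 0
  · exact ⟨0, by simp [hx]⟩
  obtain ⟨r, s, hs, hrs⟩ := IsFractionRing.div_surjective (A := NumberField.RingOfIntegers K) x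
  have hs0 : s ≠ 0 := nonZeroDivisors.ne_zero hs
  have hsK : algebraMap (NumberField.RingOfIntegers K) K s ≠ 0 :=
    IsFractionRing.to_map_ne_zero_of_mem_nonZeroDivisors hs
  have hr0 : r ≠ 0 := by
    intro h0
    apply hx
    rw [← hrs, h0, map_zero, zero_div]
  have key : ∀ v : HeightOneSpectrum (NumberField.RingOfIntegers K),
      v.intValuationDef r ≤ v.intValuationDef s := by
    intro v
    have h1 := h v
    have e : algebraMap (NumberField.RingOfIntegers K) K r
        = x * algebraMap (NumberField.RingOfIntegers K) K s := by
      rw [← hrs, div_mul_cancel₀ _ hsK]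
    have h2 : v.valuation K (algebraMap (NumberField.RingOfIntegers K) K r)
        ≤ v.valuation K (algebraMap (NumberField.RingOfIntegers K) K s) := by
      rw [e, map_mul]
      calc v.valuation K x * v.valuation K (algebraMap (NumberField.RingOfIntegers K) K s)
          ≤ 1 * v.valuation K (algebraMap (NumberField.RingOfIntegers K) K s) :=
            mul_le_mul_left h1 _
        _ = _ := one_mul _
    rwa [v.valuation_of_algebraMap, v.valuation_of_algebraMap,
      HeightOneSpectrum.intValuation_apply, HeightOneSpectrum.intValuation_apply] at h2
  have hIdvd : Ideal.span {s} ∣ Ideal.span {r} := by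
    rw [← Associates.mk_le_mk_iff_dvd]
    apply assoc_le_of_count_le
    · rw [Associates.mk_ne_zero, Ne, Ideal.zero_eq_bot, Ideal.span_singleton_eq_bot]
      exact hs0
    · rw [Associates.mk_ne_zero, Ne, Ideal.zero_eq_bot, Ideal.span_singleton_eq_bot]
      exact hr0
    · intro P hP
      obtain ⟨I, rfl⟩ := Associates.mk_surjective P
      have hI : Irreducible I := Associates.irreducible_mk.mp hP
      have hIp : Prime I := UniqueFactorizationMonoid.irreducible_iff_prime.mp hI
      set v : HeightOneSpectrum (NumberField.RingOfIntegers K) :=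
        ⟨I, Ideal.isPrime_of_prime hIp, by rw [← Ideal.zero_eq_bot]; exact hIp.ne_zero⟩ with hv
      have h3 := key v
      rw [v.intValuationDef_if_neg hs0, v.intValuationDef_if_neg hr0, WithZero.exp_le_exp,
        neg_le_neg_iff, Nat.cast_le] at h3
      exact h3
  have hle : Ideal.span {r} ≤ Ideal.span {s} := Ideal.le_of_dvd hIdvd
  have hmem : r ∈ Ideal.span {s} := hle (Ideal.mem_span_singleton_self r)
  obtain ⟨t, ht⟩ := Ideal.mem_span_singleton.mp hmem
  refine ⟨t, ?_⟩
  have : algebraMap (NumberField.RingOfIntegers K) K r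
      = algebraMap (NumberField.RingOfIntegers K) K s
        * algebraMap (NumberField.RingOfIntegers K) K t := by
    rw [← map_mul, ← ht]
  rw [← hrs, this, mul_div_cancel_left₀ _ hsK]

theorem weil_val_eq_one {K : Type*} [Field K] [NumberField K]
    (p : ℕ) (hp : p.Prime) (a : ℕ) (m : ℤ) (x : K) (hx0 : x ≠ 0)
    (hint : ∃ N : ℕ, IsIntegral ℤ (((p : K) ^ a) ^ N * x))
    (hw : ∀ σ : K →+* ℂ, σ x * (starRingEnd ℂ) (σ x) = ((p : ℂ) ^ a) ^ m)
    (v : HeightOneSpectrum (NumberField.RingOfIntegers K))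
    (hv : (p : NumberField.RingOfIntegers K) ∉ v.asIdeal) :
    v.valuation K x = 1 := by
  obtain ⟨N, hN⟩ := hint
  obtain ⟨y, hy⟩ := (IsIntegralClosure.isIntegral_iff
    (A := NumberField.RingOfIntegers K)).mp hN
  have hpK0 : (p : K) ≠ 0 := Nat.cast_ne_zero.mpr hp.ne_zero
  have hy0 : y ≠ 0 := by
    intro h0
    rw [h0, map_zero] at hy
    have := mul_ne_zero (pow_ne_zero N (pow_ne_zero a hpK0)) hx0
    exact this hy.symm
  set M := Ideal.absNorm (Ideal.span {y}) with hMdef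
  have hM0 : M ≠ 0 := by
    rw [hMdef, Ne, Ideal.absNorm_eq_zero_iff, Ideal.span_singleton_eq_bot]
    exact hy0
  have hp0 : (p : ℂ) ≠ 0 := Nat.cast_ne_zero.mpr hp.ne_zero
  -- every prime factor of M equals p
  have C : ∀ ℓ : ℕ, ℓ.Prime → ℓ ∣ M → ℓ = p := by
    intro ℓ hℓ hdvd
    set n : ℤ := Algebra.norm ℤ y with hn
    have hMn : M = n.natAbs := Ideal.absNorm_span_singleton y
    have hconj : ∀ σ : K →ₐ[ℚ] ℂ,
        σ (algebraMap (NumberField.RingOfIntegers K) K y)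
          * (starRingEnd ℂ) (σ (algebraMap (NumberField.RingOfIntegers K) K y))
        = ((p : ℂ) ^ a) ^ (2 * N) * ((p : ℂ) ^ a) ^ m := by
      intro σ
      have hw2 := hw (σ : K →+* ℂ)
      have hval : σ (algebraMap (NumberField.RingOfIntegers K) K y)
          = ((p : ℂ) ^ a) ^ N * (σ : K →+* ℂ) x := by
        rw [hy]
        simp [map_mul, map_pow]
      rw [hval, map_mul]
      have hc : (starRingEnd ℂ) (((p : ℂ) ^ a) ^ N) = ((p : ℂ) ^ a) ^ N := by
        simp
      rw [hc]
      have : ((p : ℂ) ^ a) ^ N * (σ : K →+* ℂ) x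
            * (((p : ℂ) ^ a) ^ N * (starRingEnd ℂ) ((σ : K →+* ℂ) x))
          = ((p : ℂ) ^ a) ^ (2 * N)
            * ((σ : K →+* ℂ) x * (starRingEnd ℂ) ((σ : K →+* ℂ) x)) := by
        ring
      rw [this, hw2]
    have hnorm := Algebra.norm_eq_prod_embeddings ℚ ℂ
      (algebraMap (NumberField.RingOfIntegers K) K y)
    have hratC : (algebraMap ℚ ℂ)
        (Algebra.norm ℚ (algebraMap (NumberField.RingOfIntegers K) K y)) = ((n : ℚ) : ℂ) := by
      rw [← Algebra.coe_norm_int y, eq_ratCast]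
    set d : ℕ := Fintype.card (K →ₐ[ℚ] ℂ) with hd
    have hsq : ((n : ℚ) : ℂ) * (starRingEnd ℂ) ((n : ℚ) : ℂ)
        = (((p : ℂ) ^ a) ^ (2 * N) * ((p : ℂ) ^ a) ^ m) ^ d := by
      rw [← hratC, hnorm, map_prod, ← Finset.prod_mul_distrib]
      rw [Finset.prod_congr rfl (fun σ _ => hconj σ), Finset.prod_const]
      congr 1
    have hconjn : (starRingEnd ℂ) (((n : ℚ) : ℂ)) = ((n : ℚ) : ℂ) := map_ratCast _ _
    rw [hconjn] at hsq
    have hcast : (((n : ℚ)) : ℂ) = (n : ℂ) := by push_cast; ring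
    rw [hcast] at hsq
    set E : ℤ := ((a : ℤ) * ((2 * N : ℤ) + m)) * (d : ℤ) with hE
    have hrhs : (((p : ℂ) ^ a) ^ (2 * N) * ((p : ℂ) ^ a) ^ m) ^ d = (p : ℂ) ^ E := by
      rw [← zpow_natCast (p : ℂ) a, ← zpow_natCast ((p : ℂ) ^ (a : ℤ)) (2 * N),
        ← zpow_mul, ← zpow_mul, ← zpow_add₀ hp0, ← zpow_natCast
          ((p : ℂ) ^ ((a : ℤ) * (2 * N : ℕ) + (a : ℤ) * m)) d, ← zpow_mul]
      congr 1
      push_cast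
      ring
    have hsq2 : (n : ℂ) ^ 2 = (p : ℂ) ^ E := by
      rw [sq, hsq, hrhs]
    rcases le_or_gt 0 E with hE0 | hE0
    · have hC : ((n ^ 2 : ℤ) : ℂ) = ((p ^ E.toNat : ℕ) : ℂ) := by
        push_cast
        rw [hsq2, ← zpow_natCast (p : ℂ) E.toNat, Int.toNat_of_nonneg hE0]
      have hZ : (n ^ 2 : ℤ) = ((p ^ E.toNat : ℕ) : ℤ) := by exact_mod_cast hC
      have hNat : M ^ 2 = p ^ E.toNat := by
        rw [hMn, ← Int.natAbs_pow, hZ]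
        exact Int.natAbs_natCast _
      have hdvd2 : ℓ ∣ p ^ E.toNat := by
        rw [← hNat]
        exact hdvd.trans (dvd_pow_self M two_ne_zero)
      exact (Nat.prime_dvd_prime_iff_eq hℓ hp).mp (hℓ.dvd_of_dvd_pow hdvd2)
    · have hC : ((n ^ 2 * (p : ℤ) ^ ((-E).toNat) : ℤ) : ℂ) = 1 := by
        push_cast
        rw [hsq2, ← zpow_natCast (p : ℂ) (-E).toNat, Int.toNat_of_nonneg (by omega),
          ← zpow_add₀ hp0]
        simp
      have hZ : (n ^ 2 * (p : ℤ) ^ ((-E).toNat) : ℤ) = 1 := by exact_mod_cast hC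
      have h4 := congrArg Int.natAbs hZ
      simp only [Int.natAbs_mul, Int.natAbs_pow, Int.natAbs_one, Int.natAbs_natCast] at h4
      have h5 : n.natAbs ^ 2 = 1 := Nat.dvd_one.mp ⟨_, h4.symm⟩
      have hM1 : M = 1 := by
        rw [hMn]
        simpa using pow_eq_one_iff (n := 2) (M := ℕ) |>.mp h5
      rw [hM1] at hdvd
      exact absurd (Nat.dvd_one.mp hdvd) hℓ.ne_one
  -- valuation of p at v is 1
  have hvp : v.valuation K ((p : K)) = 1 := by
    have h1 : ((p : K)) = algebraMap (NumberField.RingOfIntegers K) K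
        ((p : NumberField.RingOfIntegers K)) := (map_natCast _ p).symm
    rw [h1, v.valuation_of_algebraMap, HeightOneSpectrum.intValuation_apply]
    rcases lt_or_eq_of_le (v.intValuation_le_one ((p : NumberField.RingOfIntegers K))) with hlt | heq
    · exfalso
      have hdvd := (v.intValuation_lt_one_iff_dvd _).mp hlt
      exact hv (Ideal.dvd_span_singleton.mp hdvd)
    · exact heq
  -- intValuation of y at v is 1
  have hyval : v.intValuationDef y = 1 := by
    rcases lt_or_eq_of_le (v.intValuation_le_one y) with hlt | heq
    · exfalso
      have hdvd := (v.intValuation_lt_one_iff_dvd y).mp hlt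
      have hle : Ideal.span {y} ≤ v.asIdeal := Ideal.le_of_dvd hdvd
      have hdvdM : Ideal.absNorm v.asIdeal ∣ M := Ideal.absNorm_dvd_absNorm_of_le hle
      set A := Ideal.absNorm v.asIdeal with hA
      have hA0 : A ≠ 0 := by
        rw [hA, Ne, Ideal.absNorm_eq_zero_iff]
        exact v.ne_bot
      have hA1 : A ≠ 1 := by
        rw [hA, Ne, Ideal.absNorm_eq_one_iff]
        exact v.isPrime.ne_top
      have hAp : A = p ^ A.primeFactorsList.length :=
        Nat.eq_prime_pow_of_unique_prime_dvd hA0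
          (fun {q} hq hqd => C q hq (hqd.trans hdvdM))
      have hmem : ((A : ℕ) : NumberField.RingOfIntegers K) ∈ v.asIdeal :=
        Ideal.absNorm_mem v.asIdeal
      rw [hAp] at hmem
      push_cast at hmem
      exact hv (v.isPrime.mem_of_pow_mem _ hmem)
    · exact heq
  have hval : v.valuation K (algebraMap (NumberField.RingOfIntegers K) K y)
      = v.valuation K (((p : K) ^ a) ^ N) * v.valuation K x := by
    rw [hy, map_mul]
  rw [v.valuation_of_algebraMap, HeightOneSpectrum.intValuation_apply, hyval,
    map_pow, map_pow, hvp, one_pow, one_pow, one_mul] at hval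
  exact hval.symm

/-- Let `K` be a number field, `p` a prime, `q = p^a` with `a ≥ 1`, and
`π, π′ ∈ K^×` Weil `q`-numbers of the same weight `m`.  If `ord_v(π) = ord_v(π′)` for
every prime ideal `v` of `O_K` lying above `p`, then `π/π′` is a root of unity: a Weil
`q`-number is determined up to a root of unity by its slope function. -/
theorem stmt6 {K : Type*} [Field K] [NumberField K]
    (p : ℕ) (hp : p.Prime) (a : ℕ) (ha : 1 ≤ a) (m : ℤ)
    (π π' : K) (hπ0 : π ≠ 0) (hπ'0 : π' ≠ 0)
    (hint : ∃ N : ℕ, IsIntegral ℤ (((p : K) ^ a) ^ N * π))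
    (hint' : ∃ N : ℕ, IsIntegral ℤ (((p : K) ^ a) ^ N * π'))
    (hw : ∀ σ : K →+* ℂ, σ π * (starRingEnd ℂ) (σ π) = ((p : ℂ) ^ a) ^ m)
    (hw' : ∀ σ : K →+* ℂ, σ π' * (starRingEnd ℂ) (σ π') = ((p : ℂ) ^ a) ^ m)
    (hord : ∀ v : HeightOneSpectrum (NumberField.RingOfIntegers K),
      (p : NumberField.RingOfIntegers K) ∈ v.asIdeal → ordv v π = ordv v π') :
    ∃ n : ℕ, 0 < n ∧ (π / π') ^ n = 1 := by
  have hvaleq : ∀ v : HeightOneSpectrum (NumberField.RingOfIntegers K),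
      (p : NumberField.RingOfIntegers K) ∈ v.asIdeal →
      v.valuation K π = v.valuation K π' := by
    intro v hvmem
    have h := hord v hvmem
    have h1 : v.valuation K π ≠ 0 := (Valuation.ne_zero_iff _).mpr hπ0
    have h2 : v.valuation K π' ≠ 0 := (Valuation.ne_zero_iff _).mpr hπ'0
    rw [ordv, ordv, dif_neg h1, dif_neg h2] at h
    have h3 : WithZero.unzero h1 = WithZero.unzero h2 :=
      Multiplicative.toAdd.injective (neg_injective h)
    calc v.valuation K π = (((WithZero.unzero h1 : Multiplicative ℤ) : WithZero (Multiplicative ℤ))) :=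
          (WithZero.coe_unzero h1).symm
      _ = _ := by rw [h3, WithZero.coe_unzero]
  have hle : ∀ v : HeightOneSpectrum (NumberField.RingOfIntegers K),
      v.valuation K (π / π') ≤ 1 := by
    intro v
    by_cases hvp : (p : NumberField.RingOfIntegers K) ∈ v.asIdeal
    · rw [map_div₀, hvaleq v hvp, div_self ((Valuation.ne_zero_iff _).mpr hπ'0)]
    · have h1 := weil_val_eq_one p hp a m π hπ0 hint hw v hvp
      have h2 := weil_val_eq_one p hp a m π' hπ'0 hint' hw' v hvp
      rw [map_div₀, h1, h2, div_one]
  obtain ⟨y, hy⟩ := exists_algebraMap_eq (π / π') hle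
  have hyint : IsIntegral ℤ (π / π') := hy ▸ NumberField.RingOfIntegers.isIntegral_coe y
  have hnorm1 : ∀ φ : K →+* ℂ, ‖φ (π / π')‖ = 1 := by
    intro φ
    have habs : ‖φ π‖ = ‖φ π'‖ := by
      have hC : (Complex.normSq (φ π) : ℂ) = (Complex.normSq (φ π') : ℂ) := by
        rw [← Complex.mul_conj, ← Complex.mul_conj, hw φ, hw' φ]
      have hsq : Complex.normSq (φ π) = Complex.normSq (φ π') := by exact_mod_cast hC
      rw [Complex.norm_def, Complex.norm_def, hsq]
    have hne : ‖φ π'‖ ≠ 0 := by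
      rw [norm_ne_zero_iff]
      exact (map_ne_zero φ).mpr hπ'0
    rw [map_div₀, norm_div, habs, div_self hne]
  obtain ⟨n, hn, hpow⟩ := NumberField.Embeddings.pow_eq_one_of_norm_eq_one K ℂ hyint hnorm1
  exact ⟨n, hn, hpow⟩
end

section
/- Let K be a number field, p a prime number, q = p^a with a ≥ 1, and let π ∈ K^× be a Weil q-number of weight m. If ord_v(π) = 0 for every nonzero prime ideal v of O_K lying above p, then m = 0 and π is a root of unity. (A Weil germ is 1 if and only if its slopes are all zero.) -/
open IsDedekindDomain

open IsDedekindDomain.HeightOneSpectrum in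
open Classical in
/-- Auxiliary: divisibility from comparison of all `v`-adic valuations. -/
theorem aux_dvd_of_intValuation_le {R : Type*} [CommRing R] [IsDedekindDomain R]
    {n d : R} (hn : n ≠ 0) (hd0 : d ≠ 0)
    (hval : ∀ v : HeightOneSpectrum R, v.intValuation n ≤ v.intValuation d) : d ∣ n := by
  have hcount : ∀ v : HeightOneSpectrum R,
      (Associates.mk v.asIdeal).count (Associates.mk (Ideal.span {d})).factors ≤
      (Associates.mk v.asIdeal).count (Associates.mk (Ideal.span {n})).factors := by
    intro v
    have := hval v
    rw [intValuation_apply, intValuation_apply, intValuationDef_if_neg v hn,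
      intValuationDef_if_neg v hd0, WithZero.exp_le_exp,
      neg_le_neg_iff, Int.ofNat_le] at this
    exact this
  rw [← Ideal.span_singleton_le_span_singleton, ← Ideal.dvd_iff_le, ← Associates.mk_le_mk_iff_dvd,
    ← Associates.factors_le]
  have hdb : Associates.mk (Ideal.span {d} : Ideal R) ≠ 0 := by
    rw [Associates.mk_ne_zero]; exact (not_iff_not.mpr Ideal.span_singleton_eq_bot).mpr hd0
  have hnb : Associates.mk (Ideal.span {n} : Ideal R) ≠ 0 := by
    rw [Associates.mk_ne_zero]; exact (not_iff_not.mpr Ideal.span_singleton_eq_bot).mpr hn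
  obtain ⟨sd, hsd⟩ := Associates.factors_eq_some_iff_ne_zero.mpr hdb
  obtain ⟨sn, hsn⟩ := Associates.factors_eq_some_iff_ne_zero.mpr hnb
  rw [hsd, hsn, WithTop.coe_le_coe, Multiset.le_iff_count]
  rintro ⟨p, hp⟩
  obtain ⟨I, rfl⟩ := Associates.mk_surjective p
  have hI_irr : Irreducible I := Associates.irreducible_mk.mp hp
  have hI_prime : Prime I := UniqueFactorizationMonoid.irreducible_iff_prime.mp hI_irr
  have hI_ne : I ≠ ⊥ := hI_prime.ne_zero
  let v : HeightOneSpectrum R := ⟨I, Ideal.isPrime_of_prime hI_prime, hI_ne⟩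
  have := hcount v
  rwa [hsd, hsn, Associates.count_some hp, Associates.count_some hp] at this

open IsDedekindDomain.HeightOneSpectrum in
/-- Auxiliary: an element of the fraction field with all valuations at most one is
in the ring. -/
theorem aux_mem_of_valuation_le_one {R : Type*} [CommRing R] [IsDedekindDomain R]
    (K : Type*) [Field K] [Algebra R K] [IsFractionRing R K] (x : K)
    (h : ∀ v : HeightOneSpectrum R, v.valuation K x ≤ 1) : ∃ r : R, algebraMap R K r = x := by
  obtain ⟨⟨n, d⟩, hx⟩ := IsLocalization.surj (nonZeroDivisors R) x
  dsimp only at hx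
  have hd0 : (d : R) ≠ 0 := nonZeroDivisors.coe_ne_zero d
  have hdK : algebraMap R K d ≠ 0 := by
    simpa using (IsFractionRing.to_map_eq_zero_iff (K := K)).not.mpr hd0
  by_cases hn : n = 0
  · refine ⟨0, ?_⟩
    rw [hn, map_zero] at hx
    rcases mul_eq_zero.mp hx with h0 | h0
    · rw [map_zero, h0]
    · exact absurd h0 hdK
  have hval : ∀ v : HeightOneSpectrum R, v.intValuation n ≤ v.intValuation d := by
    intro v
    have h1 : v.valuation K (algebraMap R K n) = v.valuation K x * v.valuation K (algebraMap R K d) := by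
      rw [← map_mul, hx]
    rw [valuation_of_algebraMap, valuation_of_algebraMap] at h1
    calc v.intValuation n = v.valuation K x * v.intValuation d := h1
    _ ≤ 1 * v.intValuation d := mul_le_mul_left (h v) _
    _ = v.intValuation d := one_mul _
  obtain ⟨c, rfl⟩ := aux_dvd_of_intValuation_le hn hd0 hval
  refine ⟨c, ?_⟩
  rw [map_mul, mul_comm ((algebraMap R K) (d : R))] at hx
  exact (mul_right_cancel₀ hdK hx).symm

/-- Auxiliary: if `σ₀ y` is the complex conjugate of `σ₀ x` for some embedding `σ₀` and
`x` is an algebraic integer, then so is `y`. -/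
theorem aux_conj_integral {K : Type*} [Field K] (σ₀ : K →+* ℂ) {x y : K}
    (h : σ₀ y = (starRingEnd ℂ) (σ₀ x)) (hx : IsIntegral ℤ x) : IsIntegral ℤ y := by
  have hcx : IsIntegral ℤ ((starRingEnd ℂ) (σ₀ x)) :=
    hx.map (((starRingEnd ℂ).comp σ₀).toIntAlgHom)
  rw [← h] at hcx
  obtain ⟨P, hPm, hP⟩ := hcx
  refine ⟨P, hPm, ?_⟩
  apply σ₀.injective
  rw [map_zero, ← hP, Polynomial.hom_eval₂]
  congr 1
  ext1 k
  simp

/-- Let `K` be a number field, `p` a prime, `q = p^a` with `a ≥ 1`, and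
`π ∈ K^×` a Weil `q`-number of weight `m`.  If `ord_v(π) = 0` for every prime ideal `v`
of `O_K` lying above `p`, then `m = 0` and `π` is a root of unity: a Weil germ is `1`
if and only if all its slopes are zero. -/
theorem stmt7 {K : Type*} [Field K] [NumberField K]
    (p : ℕ) (hp : p.Prime) (a : ℕ) (ha : 1 ≤ a) (m : ℤ)
    (π : K) (hπ0 : π ≠ 0)
    (hint : ∃ N : ℕ, IsIntegral ℤ (((p : K) ^ a) ^ N * π))
    (hw : ∀ σ : K →+* ℂ, σ π * (starRingEnd ℂ) (σ π) = ((p : ℂ) ^ a) ^ m)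
    (hord : ∀ v : HeightOneSpectrum (NumberField.RingOfIntegers K),
      (p : NumberField.RingOfIntegers K) ∈ v.asIdeal → ordv v π = 0) :
    m = 0 ∧ ∃ n : ℕ, 0 < n ∧ π ^ n = 1 := by
  set R := NumberField.RingOfIntegers K with hR
  have hpK : (p : K) ≠ 0 := Nat.cast_ne_zero.mpr hp.ne_zero
  have hq0 : ((p : K) ^ a) ≠ 0 := pow_ne_zero _ hpK
  have hpR : (p : R) ≠ 0 := by
    intro h
    apply hpK
    rw [← map_natCast (algebraMap R K), h, map_zero]
  -- valuation of p at primes not above p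
  have hvp_one : ∀ v : HeightOneSpectrum R, (p : R) ∉ v.asIdeal →
      v.valuation K ((p : K)) = 1 := by
    intro v hv
    have hle : v.valuation K ((p : K)) ≤ 1 := by
      rw [← map_natCast (algebraMap R K)]
      exact v.valuation_le_one _
    rcases lt_or_eq_of_le hle with hlt | heq
    · exfalso
      apply hv
      rw [← map_natCast (algebraMap R K), v.valuation_lt_one_iff_dvd] at hlt
      exact Ideal.dvd_span_singleton.mp hlt
    · exact heq
  -- valuation of π at primes above p is 1
  have hvπ_one : ∀ v : HeightOneSpectrum R, (p : R) ∈ v.asIdeal →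
      v.valuation K π = 1 := by
    intro v hv
    have h0 : v.valuation K π ≠ 0 := (Valuation.ne_zero_iff _).mpr hπ0
    have ho := hord v hv
    rw [ordv, dif_neg h0, neg_eq_zero] at ho
    have h1 : WithZero.unzero h0 = 1 := toAdd_eq_zero.mp ho
    rw [← WithZero.coe_unzero h0, h1, WithZero.coe_one]
  -- all valuations of π are ≤ 1
  have hvle : ∀ v : HeightOneSpectrum R, v.valuation K π ≤ 1 := by
    obtain ⟨N, hN⟩ := hint
    intro v
    by_cases hv : (p : R) ∈ v.asIdeal
    · exact le_of_eq (hvπ_one v hv)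
    · have h1 : v.valuation K (((p : K) ^ a) ^ N * π) ≤ 1 := v.valuation_le_one ⟨_, hN⟩
      rw [map_mul, map_pow, map_pow, hvp_one v hv, one_pow, one_pow, one_mul] at h1
      exact h1
  have hπint : IsIntegral ℤ π := by
    obtain ⟨r, hr⟩ := aux_mem_of_valuation_le_one K π hvle
    rw [← hr]
    exact r.isIntegral_coe
  -- pick an embedding
  have hcard : 0 < Fintype.card (K →+* ℂ) := by
    rw [NumberField.Embeddings.card K ℂ]
    exact Module.finrank_pos
  obtain ⟨σ₀⟩ := Fintype.card_pos_iff.mp hcard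
  -- the "conjugate" element
  set π' : K := ((p : K) ^ a) ^ m * π⁻¹ with hπ'
  have hσπ0 : σ₀ π ≠ 0 := (map_ne_zero σ₀).mpr hπ0
  have hσπ' : σ₀ π' = (starRingEnd ℂ) (σ₀ π) := by
    rw [hπ', map_mul, map_zpow₀, map_pow, map_natCast, map_inv₀, ← hw σ₀,
      mul_comm (σ₀ π) _, mul_assoc, mul_inv_cancel₀ hσπ0, mul_one]
  have hπ'int : IsIntegral ℤ π' := aux_conj_integral σ₀ hσπ' hπint
  have hπ'le : ∀ v : HeightOneSpectrum R, v.valuation K π' ≤ 1 :=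
    fun v => v.valuation_le_one ⟨π', hπ'int⟩
  -- π⁻¹ is integral
  have hπinvle : ∀ v : HeightOneSpectrum R, v.valuation K π⁻¹ ≤ 1 := by
    intro v
    by_cases hv : (p : R) ∈ v.asIdeal
    · rw [map_inv₀, hvπ_one v hv, inv_one]
    · have heq : π⁻¹ = ((p : K) ^ a) ^ (-m) * π' := by
        rw [hπ', ← mul_assoc, ← zpow_add₀ hq0, neg_add_cancel, zpow_zero, one_mul]
      rw [heq, map_mul, map_zpow₀, map_pow, hvp_one v hv, one_pow, one_zpow, one_mul]
      exact hπ'le v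
  have hπinvint : IsIntegral ℤ π⁻¹ := by
    obtain ⟨r, hr⟩ := aux_mem_of_valuation_le_one K π⁻¹ hπinvle
    rw [← hr]
    exact r.isIntegral_coe
  have hσπ'' : σ₀ π'⁻¹ = (starRingEnd ℂ) (σ₀ π⁻¹) := by
    rw [map_inv₀, map_inv₀, hσπ', ← map_inv₀]
  have hπ''int : IsIntegral ℤ π'⁻¹ := aux_conj_integral σ₀ hσπ'' hπinvint
  have hπ''le : ∀ v : HeightOneSpectrum R, v.valuation K π'⁻¹ ≤ 1 :=
    fun v => v.valuation_le_one ⟨π'⁻¹, hπ''int⟩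
  -- find a prime above p
  have hnu : ¬IsUnit ((p : R)) := by
    intro hu
    obtain ⟨u, hu'⟩ := hu.exists_right_inv
    have huK : algebraMap R K u = algebraMap ℚ K ((p : ℚ)⁻¹) := by
      have : (p : K) * algebraMap R K u = 1 := by
        rw [← map_natCast (algebraMap R K), ← map_mul, hu', map_one]
      rw [map_inv₀, map_natCast]
      field_simp at this ⊢
      linear_combination this
    have hintu : IsIntegral ℤ ((p : ℚ)⁻¹) := by
      have h1 : IsIntegral ℤ (algebraMap R K u) := u.isIntegral_coe
      rw [huK] at h1
      exact (isIntegral_algebraMap_iff (algebraMap ℚ K).injective).mp h1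
    obtain ⟨z, hz⟩ := IsIntegrallyClosed.isIntegral_iff.mp hintu
    have hz' : (z : ℚ) = (p : ℚ)⁻¹ := by exact_mod_cast hz
    have hzp : (z : ℚ) * p = 1 := by
      rw [hz']
      exact inv_mul_cancel₀ (by exact_mod_cast hp.ne_zero)
    have : (z * (p : ℤ) : ℤ) = 1 := by exact_mod_cast hzp
    have := Int.eq_one_of_mul_eq_one_left (by positivity) this
    have h2le := hp.two_le
    omega
  obtain ⟨M, hMmax, hMle⟩ := Ideal.exists_le_maximal (Ideal.span {(p : R)})
    ((Ideal.span_singleton_eq_top).not.mpr hnu)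
  have hpM : (p : R) ∈ M := hMle (Ideal.subset_span rfl)
  have hMne : M ≠ ⊥ := by
    intro h
    rw [h] at hpM
    exact hpR (Ideal.mem_bot.mp hpM)
  set v₀ : HeightOneSpectrum R := ⟨M, hMmax.isPrime, hMne⟩ with hv₀
  have hγlt : v₀.valuation K ((p : K)) < 1 := by
    rw [← map_natCast (algebraMap R K), v₀.valuation_lt_one_iff_dvd]
    exact Ideal.dvd_span_singleton.mpr hpM
  have hγ0 : v₀.valuation K ((p : K)) ≠ 0 := (Valuation.ne_zero_iff _).mpr hpK
  -- extract the integer exponent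
  set g : Multiplicative ℤ := WithZero.unzero hγ0 with hg
  have hγg : v₀.valuation K ((p : K)) = (g : WithZero (Multiplicative ℤ)) := (WithZero.coe_unzero hγ0).symm
  have hk : g.toAdd < 0 := by
    have : (g : WithZero (Multiplicative ℤ)) < 1 := hγg ▸ hγlt
    rw [← WithZero.coe_one, WithZero.coe_lt_coe] at this
    exact this
  have hval_π' : v₀.valuation K π' = ((g ^ a) ^ m : Multiplicative ℤ) := by
    rw [hπ', map_mul, map_zpow₀, map_pow, hγg, map_inv₀, hvπ_one v₀ hpM, inv_one, mul_one,
      ← WithZero.coe_pow, ← WithZero.coe_zpow]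
  have h1 : ((g ^ a) ^ m : Multiplicative ℤ) ≤ 1 := by
    have := hπ'le v₀
    rw [hval_π', ← WithZero.coe_one, WithZero.coe_le_coe] at this
    exact this
  have h2 : ((g ^ a) ^ (-m) : Multiplicative ℤ) ≤ 1 := by
    have := hπ''le v₀
    rw [map_inv₀, hval_π', ← WithZero.coe_one, ← WithZero.coe_inv, WithZero.coe_le_coe,
      ← zpow_neg] at this
    exact this
  have hm0 : m = 0 := by
    have t1 : m * (a * g.toAdd) ≤ 0 := by
      have := Multiplicative.toAdd_le.mpr h1
      simpa [toAdd_zpow, toAdd_pow, smul_eq_mul, mul_comm, mul_left_comm] using this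
    have t2 : -(m * (a * g.toAdd)) ≤ 0 := by
      have := Multiplicative.toAdd_le.mpr h2
      simpa [toAdd_zpow, toAdd_pow, smul_eq_mul, mul_comm, mul_left_comm] using this
    have heq0 : m * (a * g.toAdd) = 0 := le_antisymm t1 (by omega)
    rcases mul_eq_zero.mp heq0 with h | h
    · exact h
    · exfalso
      rcases mul_eq_zero.mp h with h' | h'
      · have : (a : ℤ) ≠ 0 := by exact_mod_cast Nat.one_le_iff_ne_zero.mp ha
        exact this h'
      · omega
  refine ⟨hm0, ?_⟩
  have hnorm : ∀ φ : K →+* ℂ, ‖φ π‖ = 1 := by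
    intro φ
    have := hw φ
    rw [hm0, zpow_zero, Complex.mul_conj] at this
    have hns : Complex.normSq (φ π) = 1 := by exact_mod_cast this
    have hsq : ‖φ π‖ ^ 2 = 1 := by
      rw [Complex.sq_norm, hns]
    nlinarith [norm_nonneg (φ π)]
  obtain ⟨n, hn, hpow⟩ := NumberField.Embeddings.pow_eq_one_of_norm_eq_one K ℂ hπint hnorm
  exact ⟨n, hn, hpow⟩
end

section
/- Let K ⊆ ℂ be a number field that is Galois over ℚ and stable under complex conjugation, and suppose that the automorphism ι ∈ Gal(K/ℚ) obtained by restricting complex conjugation to K is central in Gal(K/ℚ). Let ψ : Gal(K/ℚ) → {0,1} be a function with ψ(g) + ψ(ι∘g) = 1 for all g ∈ Gal(K/ℚ) (a CM-type on K). Let α be an algebraic integer in K whose norm N = Nm_{K/ℚ}(α) is positive. Then the element β = ∏_{g ∈ Gal(K/ℚ)} g(α)^{ψ(g)} is an algebraic integer in K satisfying τ(β)·(the complex conjugate of τ(β)) = N for every field embedding τ : K → ℂ; that is, β is a Weil N-integer of weight 1. -/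
/-- Let `K` be a number field, Galois over `ℚ`, admitting an
automorphism `ι` (the restriction of complex conjugation, necessarily central in
`Gal(K/ℚ)`) such that `σ ∘ ι = conj ∘ σ` for every embedding `σ : K → ℂ`.  Let
`ψ : Gal(K/ℚ) → {0,1}` be a CM-type on `K`, i.e. `ψ(g) + ψ(ι∘g) = 1` for all `g`.
Let `α` be an algebraic integer in `K` with positive norm `N = Nm_{K/ℚ}(α)`.  Then
`β = ∏_g g(α)^{ψ(g)}` is an algebraic integer in `K` with
`τ(β)·conj(τ(β)) = N` for every embedding `τ : K → ℂ`, i.e. `β` is a Weil `N`-integer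
of weight `1`. -/
theorem stmt9 {K : Type*} [Field K] [NumberField K] [IsGalois ℚ K]
    (ι : K ≃ₐ[ℚ] K)
    (hι : ∀ (σ : K →+* ℂ) (x : K), σ (ι x) = (starRingEnd ℂ) (σ x))
    (ψ : (K ≃ₐ[ℚ] K) → ℕ)
    (hψ01 : ∀ g, ψ g = 0 ∨ ψ g = 1)
    (hψ : ∀ g : K ≃ₐ[ℚ] K, ψ g + ψ (g.trans ι) = 1)
    (α : K) (hα : IsIntegral ℤ α)
    (hN : 0 < Algebra.norm ℚ α) :
    IsIntegral ℤ (∏ g : K ≃ₐ[ℚ] K, g α ^ ψ g) ∧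
    ∀ τ : K →+* ℂ,
      τ (∏ g : K ≃ₐ[ℚ] K, g α ^ ψ g) *
        (starRingEnd ℂ) (τ (∏ g : K ≃ₐ[ℚ] K, g α ^ ψ g)) = (Algebra.norm ℚ α : ℂ) := by
  constructor
  · exact IsIntegral.prod _ fun g _ =>
      (hα.map (AlgHom.restrictScalars ℤ g.toAlgHom)).pow _
  · intro τ
    have hbij : Function.Bijective (fun g : K ≃ₐ[ℚ] K => g.trans ι) := by
      constructor
      · intro a b h
        ext x
        have := congrArg (fun f : K ≃ₐ[ℚ] K => ι.symm (f x)) h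
        simpa using this
      · intro b
        exact ⟨b.trans ι.symm, by ext x; simp⟩
    have h1 : (starRingEnd ℂ) (τ (∏ g : K ≃ₐ[ℚ] K, g α ^ ψ g))
        = ∏ g : K ≃ₐ[ℚ] K, τ (g α) ^ ψ (g.trans ι.symm) := by
      rw [map_prod, map_prod]
      rw [Fintype.prod_bijective _ hbij
        (fun g => (starRingEnd ℂ) (τ (g α ^ ψ g)))
        (fun g => τ (g α) ^ ψ (g.trans ι.symm))]
      intro g
      have h4 : ψ ((g.trans ι).trans ι.symm) = ψ g := by
        congr 1; ext x; simp
      simp only [AlgEquiv.trans_apply, h4, map_pow]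
      rw [← hι τ (g α)]
    rw [h1, map_prod]
    simp only [map_pow]
    rw [← Finset.prod_mul_distrib]
    have h2 : ∀ g : K ≃ₐ[ℚ] K, τ (g α) ^ ψ g * τ (g α) ^ ψ (g.trans ι.symm) = τ (g α) := by
      intro g
      rw [← pow_add]
      have := hψ (g.trans ι.symm)
      have h3 : (g.trans ι.symm).trans ι = g := by ext x; simp
      rw [h3] at this
      rw [add_comm (ψ g), this, pow_one]
    rw [Finset.prod_congr rfl fun g _ => h2 g, ← map_prod,
      ← Algebra.norm_eq_prod_automorphisms]
    simp
end

section
/- Let K ⊆ ℂ be a number field that is Galois over ℚ and stable under complex conjugation, such that the restriction ι of complex conjugation to K is central in Gal(K/ℚ). Let p be a prime number and let X be the set of prime ideals of O_K lying above p; assume ι(w) ≠ w for every w ∈ X. Since K/ℚ is Galois, all w ∈ X have the same ramification index e and residue degree f over p; set n₀ = e·f. Then for every m ∈ ℤ and every function φ : X → ℤ satisfying φ(w) + φ(ι(w)) = n₀·m for all w ∈ X, there exist an integer N ≥ 1 and an element π ∈ K^× such that σ(π)·(the complex conjugate of σ(π)) = p^{N·m} for every field embedding σ : K → ℂ, and n₀·ord_w(π)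 = N·e·φ(w) for every w ∈ X (that is, π is a Weil p^N-number of weight m whose slope function is φ(w)/n₀). -/
open IsDedekindDomain

section Aux
variable {K : Type*} [Field K] [NumberField K]

lemma ordv_val (v : HeightOneSpectrum (NumberField.RingOfIntegers K)) {x : K} (hx : x ≠ 0) :
    v.valuation K x = (Multiplicative.ofAdd (-(ordv v x)) : Multiplicative ℤ) := by
  have h0 : v.valuation K x ≠ 0 := (Valuation.ne_zero_iff _).mpr hx
  rw [ordv, dif_neg h0, neg_neg, ofAdd_toAdd, WithZero.coe_unzero]

lemma ordv_eq_of_val (v : HeightOneSpectrum (NumberField.RingOfIntegers K)) {x : K} (hx : x ≠ 0)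
    {d : ℤ} (h : v.valuation K x = (Multiplicative.ofAdd (-d) : Multiplicative ℤ)) :
    ordv v x = d := by
  rw [ordv_val v hx] at h
  have := WithZero.coe_inj.mp h
  simpa using congrArg Multiplicative.toAdd this

lemma ordv_mul (v : HeightOneSpectrum (NumberField.RingOfIntegers K)) {x y : K}
    (hx : x ≠ 0) (hy : y ≠ 0) : ordv v (x * y) = ordv v x + ordv v y := by
  refine ordv_eq_of_val v (mul_ne_zero hx hy) ?_
  rw [map_mul, ordv_val v hx, ordv_val v hy, ← WithZero.coe_mul, WithZero.coe_inj,
    ← ofAdd_add, neg_add]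

lemma ordv_zpow (v : HeightOneSpectrum (NumberField.RingOfIntegers K)) {x : K}
    (hx : x ≠ 0) (k : ℤ) : ordv v (x ^ k) = k * ordv v x := by
  refine ordv_eq_of_val v (zpow_ne_zero k hx) ?_
  rw [map_zpow₀, ordv_val v hx, ← WithZero.coe_zpow, WithZero.coe_inj, ← ofAdd_zsmul]
  congr 1; rw [smul_eq_mul]; ring

lemma ordv_div (v : HeightOneSpectrum (NumberField.RingOfIntegers K)) {x y : K}
    (hx : x ≠ 0) (hy : y ≠ 0) : ordv v (x / y) = ordv v x - ordv v y := by
  have h1 : ordv v (x / y * y) = ordv v (x / y) + ordv v y :=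
    ordv_mul v (div_ne_zero hx hy) hy
  rw [div_mul_cancel₀ _ hy] at h1
  omega

lemma ordv_int_ge_iff (v : HeightOneSpectrum (NumberField.RingOfIntegers K))
    {r : NumberField.RingOfIntegers K} (hr : r ≠ 0) (n : ℕ) :
    (n : ℤ) ≤ ordv v (r : K) ↔ r ∈ v.asIdeal ^ n := by
  have hrK : (r : K) ≠ 0 := by
    exact_mod_cast fun h => hr (by exact_mod_cast h)
  have hval : v.valuation K (r : K) = v.intValuation r := v.valuation_of_algebraMap r
  rw [← Ideal.dvd_span_singleton, ← v.intValuation_le_pow_iff_dvd r,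
    ← hval, ordv_val v hrK, WithZero.exp, WithZero.coe_le_coe, Multiplicative.ofAdd_le]
  omega

lemma ordv_int_eq (v : HeightOneSpectrum (NumberField.RingOfIntegers K))
    {r : NumberField.RingOfIntegers K} (hr : r ≠ 0) {k : ℕ}
    (h1 : r ∈ v.asIdeal ^ k) (h2 : r ∉ v.asIdeal ^ (k + 1)) : ordv v (r : K) = k := by
  have ha := (ordv_int_ge_iff v hr k).mpr h1
  have hb : ¬ (((k + 1 : ℕ) : ℤ) ≤ ordv v (r : K)) :=
    fun h => h2 ((ordv_int_ge_iff v hr (k + 1)).mp h)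
  push_cast at hb ⊢
  omega

lemma ordv_int_nonneg (v : HeightOneSpectrum (NumberField.RingOfIntegers K))
    {r : NumberField.RingOfIntegers K} (hr : r ≠ 0) : 0 ≤ ordv v (r : K) := by
  have := (ordv_int_ge_iff v hr 0).mpr (by simp)
  exact_mod_cast this

lemma ordv_int_map (j : NumberField.RingOfIntegers K ≃+* NumberField.RingOfIntegers K)
    (v w : HeightOneSpectrum (NumberField.RingOfIntegers K))
    (hw : w.asIdeal = Ideal.map j v.asIdeal)
    {r : NumberField.RingOfIntegers K} (hr : r ≠ 0) :
    ordv w ((j r : NumberField.RingOfIntegers K) : K) = ordv v (r : K) := by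
  have hjr : j r ≠ 0 := fun h => hr (by simpa using j.injective (h.trans (map_zero j).symm))
  have key : ∀ n : ℕ, ((n : ℤ) ≤ ordv w (j r : K) ↔ (n : ℤ) ≤ ordv v (r : K)) := by
    intro n
    rw [ordv_int_ge_iff w hjr n, ordv_int_ge_iff v hr n, hw, ← Ideal.map_pow]
    exact Ideal.apply_mem_of_equiv_iff
  have h1 := ordv_int_nonneg w hjr
  have h2 := ordv_int_nonneg v hr
  have k1 := key (ordv v (r : K)).toNat
  have k2 := key (ordv w ((j r : NumberField.RingOfIntegers K) : K)).toNat
  omega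

lemma ordv_equiv (j : NumberField.RingOfIntegers K ≃+* NumberField.RingOfIntegers K)
    (g : K ≃+* K)
    (hg : ∀ r : NumberField.RingOfIntegers K,
      ((j r : NumberField.RingOfIntegers K) : K) = g (r : K))
    (v w : HeightOneSpectrum (NumberField.RingOfIntegers K))
    (hw : w.asIdeal = Ideal.map j v.asIdeal)
    {x : K} (hx : x ≠ 0) : ordv w (g x) = ordv v x := by
  obtain ⟨a, b, hb, hab⟩ := IsFractionRing.div_surjective (A := NumberField.RingOfIntegers K) x
  have hb0 : b ≠ 0 := nonZeroDivisors.ne_zero hb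
  simp only [← NumberField.RingOfIntegers.coe_eq_algebraMap] at hab
  have hbK : (b : K) ≠ 0 := fun h => hb0 (by exact_mod_cast h)
  rw [div_eq_iff hbK] at hab
  have haK : (a : K) ≠ 0 := hab ▸ mul_ne_zero hx hbK
  have ha0 : a ≠ 0 := fun h => haK (by rw [h]; exact_mod_cast rfl)
  have hx' : x = (a : K) / (b : K) := by rw [hab]; field_simp
  have hja : ((j a : NumberField.RingOfIntegers K) : K) ≠ 0 := by
    rw [hg]
    exact fun h => haK (by simpa using g.injective (h.trans (map_zero g).symm))
  have hjb : ((j b : NumberField.RingOfIntegers K) : K) ≠ 0 := by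
    rw [hg]
    exact fun h => hbK (by simpa using g.injective (h.trans (map_zero g).symm))
  have hgx : g x = ((j a : NumberField.RingOfIntegers K) : K) /
      ((j b : NumberField.RingOfIntegers K) : K) := by
    rw [hx', map_div₀, hg, hg]
  rw [hgx, hx', ordv_div w hja hjb, ordv_div v haK hbK,
    ordv_int_map j v w hw ha0, ordv_int_map j v w hw hb0]

/-- Transport of a height-one prime along a ring automorphism. -/
noncomputable def hosMap {R : Type*} [CommRing R] [IsDomain R] [IsDedekindDomain R]
    (j : R ≃+* R) (w : HeightOneSpectrum R) : HeightOneSpectrum R where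
  asIdeal := Ideal.map j w.asIdeal
  isPrime := Ideal.map_isPrime_of_equiv j
  ne_bot := fun h => w.ne_bot ((Ideal.map_eq_bot_iff_of_injective j.injective).mp h)

end Aux

/-- Let `K` be a number field, Galois over `ℚ`, admitting an
automorphism `ι` (the restriction of complex conjugation, necessarily central in
`Gal(K/ℚ)`) such that `σ ∘ ι = conj ∘ σ` for every embedding `σ : K → ℂ`.  Let `p` be a
prime such that `ι(w) ≠ w` for every prime `w` of `O_K` above `p`.  All such `w` have
the same ramification index `e` (i.e. `ord_w(p) = e`) and residue degree `f` (i.e. the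
absolute norm of `w` is `p^f`); set `n₀ = e·f`.  Then for every `m ∈ ℤ` and every
function `φ` on the primes above `p` with `φ(w) + φ(ι(w)) = n₀·m` for all `w | p`,
there exist `N ≥ 1` and `π ∈ K^×` with `σ(π)·conj(σ(π)) = p^{N·m}` for every embedding
`σ : K → ℂ` and `n₀·ord_w(π) = N·e·φ(w)` for every `w | p`; that is, `π` is a Weil
`p^N`-number of weight `m` with slope function `φ/n₀`. -/
theorem stmt10 {K : Type*} [Field K] [NumberField K] [IsGalois ℚ K]
    (ι : K ≃ₐ[ℚ] K)
    (hι : ∀ (σ : K →+* ℂ) (x : K), σ (ι x) = (starRingEnd ℂ) (σ x))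
    (p : ℕ) (hp : p.Prime)
    (hnofix : ∀ w : HeightOneSpectrum (NumberField.RingOfIntegers K),
      (p : NumberField.RingOfIntegers K) ∈ w.asIdeal →
      ¬(∀ x : NumberField.RingOfIntegers K,
          x ∈ w.asIdeal ↔ ∃ y ∈ w.asIdeal, (x : K) = ι (y : K)))
    (e f : ℕ)
    (he : ∀ w : HeightOneSpectrum (NumberField.RingOfIntegers K),
      (p : NumberField.RingOfIntegers K) ∈ w.asIdeal → ordv w (p : K) = e)
    (hf : ∀ w : HeightOneSpectrum (NumberField.RingOfIntegers K),
      (p : NumberField.RingOfIntegers K) ∈ w.asIdeal → Ideal.absNorm w.asIdeal = p ^ f)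
    (m : ℤ) (φ : HeightOneSpectrum (NumberField.RingOfIntegers K) → ℤ)
    (hφ : ∀ w w' : HeightOneSpectrum (NumberField.RingOfIntegers K),
      (p : NumberField.RingOfIntegers K) ∈ w.asIdeal →
      (p : NumberField.RingOfIntegers K) ∈ w'.asIdeal →
      (∀ x : NumberField.RingOfIntegers K,
        x ∈ w'.asIdeal ↔ ∃ y ∈ w.asIdeal, (x : K) = ι (y : K)) →
      φ w + φ w' = ((e : ℤ) * f) * m) :
    ∃ (N : ℕ) (π : K), 1 ≤ N ∧ π ≠ 0 ∧
      (∀ σ : K →+* ℂ, σ π * (starRingEnd ℂ) (σ π) = (p : ℂ) ^ ((N : ℤ) * m)) ∧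
      ∀ w : HeightOneSpectrum (NumberField.RingOfIntegers K),
        (p : NumberField.RingOfIntegers K) ∈ w.asIdeal →
        ((e : ℤ) * f) * ordv w π = (N : ℤ) * e * φ w := by
    classical
  obtain ⟨σ₀⟩ : Nonempty (K →+* ℂ) := inferInstance
  have hll : ∀ x : K, ι (ι x) = x := by
    intro x
    apply σ₀.injective
    rw [hι, hι, starRingEnd_self_apply]
  set j := NumberField.RingOfIntegers.mapRingEquiv (ι : K ≃+* K) with hjdef
  have hg : ∀ r : NumberField.RingOfIntegers K,
      ((j r : NumberField.RingOfIntegers K) : K) = ι (r : K) := fun r => rfl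
  have hjj : ∀ r, j (j r) = r := fun r =>
    NumberField.RingOfIntegers.ext (by rw [hg, hg, hll])
  -- basic facts about p
  have hp0R : (p : NumberField.RingOfIntegers K) ≠ 0 := Nat.cast_ne_zero.mpr hp.ne_zero
  have hp0K : (p : K) ≠ 0 := Nat.cast_ne_zero.mpr hp.ne_zero
  have hpcast : ((p : NumberField.RingOfIntegers K) : K) = (p : K) := by push_cast; rfl
  have hjp : j (p : NumberField.RingOfIntegers K) = (p : NumberField.RingOfIntegers K) :=
    NumberField.RingOfIntegers.ext (by rw [hg, hpcast, map_natCast])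
  -- p is not a unit of the ring of integers
  have hnu : ¬ IsUnit (p : NumberField.RingOfIntegers K) := by
    intro h
    have h1 : IsUnit (Algebra.norm ℤ (p : NumberField.RingOfIntegers K)) :=
      h.map (Algebra.norm ℤ)
    rw [show ((p : NumberField.RingOfIntegers K)) =
        algebraMap ℤ (NumberField.RingOfIntegers K) (p : ℤ) by simp,
      Algebra.norm_algebraMap_of_basis
        (Module.Free.chooseBasis ℤ (NumberField.RingOfIntegers K))] at h1
    have h2 : (2 : ℤ) ≤ (p : ℤ) := by exact_mod_cast hp.two_le
    have h3 : 0 < Fintype.card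
        (Module.Free.ChooseBasisIndex ℤ (NumberField.RingOfIntegers K)) := by
      rw [← Module.finrank_eq_card_chooseBasisIndex, NumberField.RingOfIntegers.rank]
      exact Module.finrank_pos
    have h4 := Int.isUnit_iff.mp h1
    have h5 : (2 : ℤ) ≤ (p : ℤ) ^ Fintype.card
        (Module.Free.ChooseBasisIndex ℤ (NumberField.RingOfIntegers K)) :=
      h2.trans (le_self_pow₀ (by omega) h3.ne')
    omega
  obtain ⟨M, hMmax, hpM⟩ := exists_max_ideal_of_mem_nonunits (mem_nonunits_iff.mpr hnu)
  have hMbot : M ≠ ⊥ := by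
    intro h
    rw [h] at hpM
    exact hp0R (by simpa using hpM)
  haveI := hMmax.isPrime
  let w₀ : HeightOneSpectrum (NumberField.RingOfIntegers K) := ⟨M, hMmax.isPrime, hMbot⟩
  have hpw₀ : (p : NumberField.RingOfIntegers K) ∈ w₀.asIdeal := hpM
  -- f ≥ 1 and e ≥ 1
  have hf1 : 1 ≤ f := by
    rcases Nat.eq_zero_or_pos f with h | h
    · exfalso
      have := hf w₀ hpw₀
      rw [h, pow_zero] at this
      exact hMmax.ne_top (Ideal.absNorm_eq_one_iff.mp this)
    · exact h
  have he1 : (1 : ℤ) ≤ (e : ℤ) := by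
    have h1 : ((1 : ℕ) : ℤ) ≤ ordv w₀ ((p : NumberField.RingOfIntegers K) : K) :=
      (ordv_int_ge_iff w₀ hp0R 1).mpr (by rwa [pow_one])
    rw [hpcast, he w₀ hpw₀] at h1
    exact_mod_cast h1
  -- the finite set of primes above p
  have hSfin : {w : HeightOneSpectrum (NumberField.RingOfIntegers K) |
      (p : NumberField.RingOfIntegers K) ∈ w.asIdeal}.Finite := by
    refine (Ideal.finite_factors (I := Ideal.span {(p : NumberField.RingOfIntegers K)}) ?_).subset
      ?_
    · simpa [Ne, Ideal.span_singleton_eq_bot] using hp0R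
    · intro w hw
      exact Ideal.dvd_span_singleton.mpr hw
  set Sfin := hSfin.toFinset with hSdef
  have hmemS : ∀ w, w ∈ Sfin ↔ (p : NumberField.RingOfIntegers K) ∈ w.asIdeal := by
    intro w; rw [hSdef, Set.Finite.mem_toFinset]; rfl
  have hw₀S : w₀ ∈ Sfin := (hmemS w₀).mpr hpw₀
  set c : ℕ := Sfin.sup (fun w => (-φ w).toNat) with hcdef
  have hce : ∀ w ∈ Sfin, 0 ≤ φ w + (c : ℤ) * e := by
    intro w hw
    have h1 : (-φ w) ≤ ((-φ w).toNat : ℤ) := Int.self_le_toNat _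
    have h2 : ((-φ w).toNat : ℤ) ≤ (c : ℤ) := by
      exact_mod_cast Finset.le_sup (f := fun w => (-φ w).toNat) hw
    have h3 : (c : ℤ) ≤ (c : ℤ) * e := le_mul_of_one_le_right (by positivity) he1
    omega
  set n : HeightOneSpectrum (NumberField.RingOfIntegers K) → ℕ :=
    fun w => (φ w + (c : ℤ) * e).toNat with hndef
  -- choose elements of exact valuation
  have hax : ∀ w : HeightOneSpectrum (NumberField.RingOfIntegers K),
      ∃ x, x ∈ w.asIdeal ^ (n w) ∧ x ∉ w.asIdeal ^ (n w + 1) := fun w =>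
    Ideal.exists_mem_pow_notMem_pow_succ w.asIdeal w.ne_bot w.isPrime.ne_top (n w)
  choose a ha1 ha2 using hax
  obtain ⟨y, hy⟩ := IsDedekindDomain.exists_forall_sub_mem_ideal (s := Sfin)
    (fun w => w.asIdeal) (fun w => n w + 1)
    (fun w _ => Ideal.prime_of_isPrime w.ne_bot w.isPrime)
    (fun w _ w' _ hne hEq => hne (HeightOneSpectrum.ext hEq))
    (fun i => a i)
  have hymem : ∀ w ∈ Sfin, y ∈ w.asIdeal ^ (n w) ∧ y ∉ w.asIdeal ^ (n w + 1) := by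
    intro w hw
    have h1 := hy w hw
    constructor
    · have h2 : y = (y - a w) + a w := by ring
      rw [h2]
      exact add_mem (Ideal.pow_le_pow_right (Nat.le_succ _) h1) (ha1 w)
    · intro h
      exact ha2 w (by simpa using sub_mem h h1)
  have hy0 : y ≠ 0 := by
    intro h
    exact (hymem w₀ hw₀S).2 (by rw [h]; exact zero_mem _)
  have hyK : (y : K) ≠ 0 := fun h => hy0 (by exact_mod_cast h)
  have hyord : ∀ w ∈ Sfin, ordv w (y : K) = φ w + (c : ℤ) * e := by
    intro w hw
    have h1 := ordv_int_eq w hy0 (hymem w hw).1 (hymem w hw).2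
    rw [h1, hndef]
    exact Int.toNat_of_nonneg (hce w hw)
  -- the element α
  set α : K := (y : K) / (p : K) ^ (c : ℤ) with hαdef
  have hpc0 : (p : K) ^ (c : ℤ) ≠ 0 := zpow_ne_zero _ hp0K
  have hα0 : α ≠ 0 := div_ne_zero hyK hpc0
  have hαord : ∀ w ∈ Sfin, ordv w α = φ w := by
    intro w hw
    rw [hαdef, ordv_div w hyK hpc0, hyord w hw, ordv_zpow w hp0K,
      he w ((hmemS w).mp hw)]
    ring
  -- transported primes
  set wb : HeightOneSpectrum (NumberField.RingOfIntegers K) →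
      HeightOneSpectrum (NumberField.RingOfIntegers K) := fun w => hosMap j w with hwbdef
  have hwbid : ∀ w, (wb w).asIdeal = Ideal.map j w.asIdeal := fun w => rfl
  have hwbmem : ∀ w, (p : NumberField.RingOfIntegers K) ∈ w.asIdeal →
      (p : NumberField.RingOfIntegers K) ∈ (wb w).asIdeal := by
    intro w hw
    have h1 : j (p : NumberField.RingOfIntegers K) ∈ Ideal.map j w.asIdeal :=
      Ideal.apply_mem_of_equiv_iff.mpr hw
    rwa [hjp] at h1
  have hpred : ∀ w, (∀ x : NumberField.RingOfIntegers K,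
      x ∈ (wb w).asIdeal ↔ ∃ y ∈ w.asIdeal, (x : K) = ι (y : K)) := by
    intro w x
    rw [hwbid, Ideal.mem_map_of_equiv]
    constructor
    · rintro ⟨z, hz, rfl⟩
      exact ⟨z, hz, (hg z).symm⟩
    · rintro ⟨z, hz, hEq⟩
      exact ⟨z, hz, NumberField.RingOfIntegers.ext (by rw [hg]; exact hEq.symm)⟩
  have hwback : ∀ w, w.asIdeal = Ideal.map j (wb w).asIdeal := by
    intro w
    ext x
    rw [hwbid, Ideal.mem_map_of_equiv]
    constructor
    · intro hx
      exact ⟨j x, Ideal.apply_mem_of_equiv_iff.mpr hx, hjj x⟩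
    · rintro ⟨z, hz, rfl⟩
      rw [Ideal.mem_map_of_equiv] at hz
      obtain ⟨t, ht, rfl⟩ := hz
      rwa [hjj]
  have hιord : ∀ (w : HeightOneSpectrum (NumberField.RingOfIntegers K)) {x : K}, x ≠ 0 →
      ordv w (ι x) = ordv (wb w) x := by
    intro w x hx
    have h1 := ordv_equiv j ι.toRingEquiv (fun r => hg r) (wb w) w (hwback w) hx
    simpa using h1
  -- definition of π
  set E : ℤ := (f : ℤ) * m with hEdef
  have hια0 : ι α ≠ 0 := fun h => hα0 (by simpa using ι.injective (by rw [h, map_zero]))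
  have hpE0 : (p : K) ^ E ≠ 0 := zpow_ne_zero _ hp0K
  set π : K := α * (p : K) ^ E / ι α with hπdef
  have hπ0 : π ≠ 0 := div_ne_zero (mul_ne_zero hα0 hpE0) hια0
  have hιπ : ι π = ι α * (p : K) ^ E / α := by
    rw [hπdef, map_div₀, map_mul, hll α, map_zpow₀, map_natCast]
  have hππ : π * ι π = (p : K) ^ (E + E) := by
    rw [hπdef, hιπ, zpow_add₀ hp0K]
    field_simp
  refine ⟨2 * f, π, by omega, hπ0, ?_, ?_⟩
  · intro σ
    rw [← hι σ π, ← map_mul, hππ, map_zpow₀, map_natCast]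
    congr 1
    push_cast
    ring
  · intro w hpw
    have hwS : w ∈ Sfin := (hmemS w).mpr hpw
    have hw'S : wb w ∈ Sfin := (hmemS (wb w)).mpr (hwbmem w hpw)
    have key := hφ w (wb w) hpw (hwbmem w hpw) (hpred w)
    have h1 : ordv w π = 2 * φ w := by
      rw [hπdef, ordv_div w (mul_ne_zero hα0 hpE0) hια0, ordv_mul w hα0 hpE0,
        ordv_zpow w hp0K, he w hpw, hαord w hwS, hιord w hα0, hαord (wb w) hw'S, hEdef]
      have h2 : φ (wb w) = (e : ℤ) * f * m - φ w := by linarith [key]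
      rw [h2]
      ring
    rw [h1]
    push_cast
    ring
end
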